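/- For the max-linear model η(s) = max_{m=1..n} φ_m(s)·Z_m with independent unit Fréchet Z_m and nonnegative weights satisfying ∑_m φ_m(s) = 1 for each s, the probability that component ℓ dominates at sites s_1,...,s_k (i.e., η(s_j) = φ_ℓ(s_j)·Z_ℓ for all j) equals p_ℓ = [∑_{m=1}^n max_{j=1..k} φ_m(s_j)/φ_ℓ(s_j)]^{-1}, with conventions 0/0 = 0, a/0 = ∞ for a > 0, 1/∞ = 0. -/

import Mathlib

open MeasureTheory ProbabilityTheory

open Set

noncomputable def frechetG (z : ℝ) : ℝ := if 0 < z then Real.exp (-1 / z) else 0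

lemma frechetG_meas : Measurable frechetG := by
  unfold frechetG
  exact Measurable.ite measurableSet_Ioi
    (Real.measurable_exp.comp (measurable_const.div measurable_id)) measurable_const

lemma frechetG_nonneg (z : ℝ) : 0 ≤ frechetG z := by
  unfold frechetG; split_ifs with h
  · exact (Real.exp_pos _).le
  · exact le_refl _

lemma frechetG_le_one (z : ℝ) : frechetG z ≤ 1 := by
  unfold frechetG; split_ifs with h
  · exact Real.exp_le_one_iff.mpr (by rw [neg_div]; simp [le_of_lt, h, div_nonneg, zero_le_one])
  · norm_num

lemma frechet_map_uniform (μ : Measure ℝ) [IsProbabilityMeasure μ]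
    (h0 : μ (Iic 0) = 0)
    (hI : ∀ t : ℝ, 0 < t → μ (Iic t) = ENNReal.ofReal (Real.exp (-1 / t))) :
    μ.map frechetG = volume.restrict (Icc (0:ℝ) 1) := by
  have hmap : IsProbabilityMeasure (μ.map frechetG) :=
    Measure.isProbabilityMeasure_map frechetG_meas.aemeasurable
  have hfin : IsFiniteMeasure (volume.restrict (Icc (0:ℝ) 1)) := by
    constructor
    rw [Measure.restrict_apply_univ]
    simp [Real.volume_Icc]
  apply MeasureTheory.Measure.ext_of_Iic
  intro u
  rw [Measure.map_apply frechetG_meas measurableSet_Iic,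
    Measure.restrict_apply measurableSet_Iic]
  rcases lt_or_ge u 0 with hu | hu
  · have h1 : frechetG ⁻¹' Iic u = ∅ := by
      ext z; simp only [mem_preimage, mem_Iic, mem_empty_iff_false, iff_false, not_le]
      exact lt_of_lt_of_le hu (frechetG_nonneg z)
    have h2 : Iic u ∩ Icc (0:ℝ) 1 = ∅ := by
      ext x; simp only [mem_inter_iff, mem_Iic, mem_Icc, mem_empty_iff_false, iff_false]
      rintro ⟨h, h', _⟩; linarith
    rw [h1, h2]
    simp
  · have h2 : Iic u ∩ Icc (0:ℝ) 1 = Icc 0 (min u 1) := by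
      ext x; simp only [mem_inter_iff, mem_Iic, mem_Icc, le_min_iff]
      tauto
    rw [h2, Real.volume_Icc]
    rcases le_or_gt 1 u with hu1 | hu1
    · have h1 : frechetG ⁻¹' Iic u = univ := by
        ext z; simp only [mem_preimage, mem_Iic, mem_univ, iff_true]
        exact le_trans (frechetG_le_one z) hu1
      rw [h1, measure_univ, min_eq_right hu1]
      norm_num
    · rcases eq_or_lt_of_le hu with hu0 | hu0
      · have h1 : frechetG ⁻¹' Iic u = Iic 0 := by
          ext z
          simp only [mem_preimage, mem_Iic, ← hu0]
          unfold frechetG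
          split_ifs with h
          · simp [not_le.mpr (Real.exp_pos _), not_le.mpr h]
          · simp [not_lt.mp h]
        rw [h1, h0, min_eq_left (by linarith), ← hu0]
        simp
      · have hlog : Real.log u < 0 := Real.log_neg hu0 hu1
        have hc : 0 < -Real.log u := by linarith
        set t : ℝ := 1 / (-Real.log u) with ht
        have htpos : 0 < t := by positivity
        have h1 : frechetG ⁻¹' Iic u = Iic t := by
          ext z
          simp only [mem_preimage, mem_Iic]
          unfold frechetG
          split_ifs with h
          · rw [← Real.exp_log hu0, Real.exp_le_exp, neg_div, neg_le,
              le_div_iff₀ h, ht, le_div_iff₀ hc, mul_comm]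
          · simp [le_trans (not_lt.mp h) htpos.le, frechetG_nonneg]
            rw [← Real.exp_log hu0]
            exact (Real.exp_pos _).le
        rw [h1, hI t htpos, min_eq_left hu1.le, sub_zero]
        congr 1
        rw [ht]
        rw [neg_div, one_div_one_div, neg_neg, Real.exp_log hu0]

lemma frechet_lintegral (μ : Measure ℝ) [IsProbabilityMeasure μ]
    (h0 : μ (Iic 0) = 0)
    (hI : ∀ t : ℝ, 0 < t → μ (Iic t) = ENNReal.ofReal (Real.exp (-1 / t)))
    (S : ℝ) (hS : 0 ≤ S) :
    ∫⁻ z, ENNReal.ofReal ((frechetG z) ^ S) ∂μ = ENNReal.ofReal (1 / (S + 1)) := by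
  have hrc : Continuous fun u : ℝ => u ^ S := by
    rw [continuous_iff_continuousAt]
    intro x
    exact Real.continuousAt_rpow_const x S (Or.inr hS)
  have hmble : Measurable fun u : ℝ => ENNReal.ofReal (u ^ S) :=
    ENNReal.measurable_ofReal.comp hrc.measurable
  calc ∫⁻ z, ENNReal.ofReal ((frechetG z) ^ S) ∂μ
      = ∫⁻ u, ENNReal.ofReal (u ^ S) ∂(μ.map frechetG) :=
        (lintegral_map hmble frechetG_meas).symm
    _ = ∫⁻ u in Icc (0:ℝ) 1, ENNReal.ofReal (u ^ S) ∂volume := by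
        rw [frechet_map_uniform μ h0 hI]
    _ = ENNReal.ofReal (∫ u in Icc (0:ℝ) 1, u ^ S ∂volume) := by
        rw [← ofReal_integral_eq_lintegral_ofReal]
        · exact (hrc.continuousOn).integrableOn_Icc
        · filter_upwards [ae_restrict_mem measurableSet_Icc] with u hu
          exact Real.rpow_nonneg hu.1 S
    _ = ENNReal.ofReal (1 / (S + 1)) := by
        congr 1
        rw [integral_Icc_eq_integral_Ioc, ← intervalIntegral.integral_of_le zero_le_one,
          integral_rpow (Or.inl (by linarith))]
        rw [Real.one_rpow, Real.zero_rpow (by linarith)]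
        norm_num

lemma iSup_ofReal_eq {ι : Type*} [Fintype ι] [Nonempty ι] (f : ι → ℝ) :
    (⨆ i, ENNReal.ofReal (f i)) = ENNReal.ofReal (Finset.univ.sup' Finset.univ_nonempty f) := by
  apply le_antisymm
  · exact iSup_le fun i => ENNReal.ofReal_le_ofReal (Finset.le_sup' f (Finset.mem_univ i))
  · obtain ⟨i, _, hi⟩ := Finset.exists_mem_eq_sup' Finset.univ_nonempty f
    rw [hi]
    exact le_iSup (fun i => ENNReal.ofReal (f i)) i

/-- In the max-linear model `η(s_j) = max_m φ_m(s_j)·Z_m` with independent unit Fréchet `Z_m`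
and nonnegative weights summing to one at each site, the probability that component `ℓ`
dominates at all `k` sites equals `[∑_m max_j φ_m(s_j)/φ_ℓ(s_j)]⁻¹`, with the extended
conventions `0/0 = 0`, `a/0 = ∞` for `a > 0`, `1/∞ = 0` (division in `ℝ≥0∞`). -/
theorem stmt6 {Ω : Type*} [MeasureSpace Ω] [IsProbabilityMeasure (ℙ : Measure Ω)]
    (n k : ℕ) (hn : 0 < n) (hk : 0 < k)
    (Z : Fin n → Ω → ℝ) (φ : Fin n → Fin k → ℝ)
    (hφ : ∀ m j, 0 ≤ φ m j) (hsum : ∀ j, ∑ m, φ m j = 1)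
    (hmeas : ∀ m, Measurable (Z m))
    (hindep : iIndepFun Z ℙ)
    (hpos : ∀ m, ∀ᵐ ω ∂ℙ, 0 < Z m ω)
    (hF : ∀ m, ∀ z : ℝ, 0 < z → ℙ {ω | Z m ω ≤ z} = ENNReal.ofReal (Real.exp (-1 / z)))
    (ℓ : Fin n) :
    ℙ {ω | ∀ j, (⨆ m, φ m j * Z m ω) = φ ℓ j * Z ℓ ω}
      = (∑ m, ⨆ j, ENNReal.ofReal (φ m j) / ENNReal.ofReal (φ ℓ j))⁻¹ := by
  have hnn : Nonempty (Fin n) := Fin.pos_iff_nonempty.mp hn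
  have hkn : Nonempty (Fin k) := Fin.pos_iff_nonempty.mp hk
  have hSfull : ∀ᵐ ω ∂ℙ, ∀ m, 0 < Z m ω := ae_all_iff.mpr hpos
  have hbdd : ∀ ω j, BddAbove (Set.range fun m => φ m j * Z m ω) :=
    fun ω j => (Set.finite_range _).bddAbove
  by_cases hgood : ∀ j m, 0 < φ m j → 0 < φ ℓ j
  · -- main case
    have hlpos : ∀ j, 0 < φ ℓ j := by
      intro j
      obtain ⟨m, hm⟩ : ∃ m ∈ Finset.univ, φ m j ≠ 0 := by
        apply Finset.exists_ne_zero_of_sum_ne_zero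
        rw [hsum j]; norm_num
      exact hgood j m (lt_of_le_of_ne (hφ m j) (Ne.symm hm.2))
    set T : Finset (Fin n) := Finset.univ.erase ℓ with hT
    set a : Fin n → ℝ := fun m => Finset.univ.sup' Finset.univ_nonempty (fun j => φ m j / φ ℓ j)
      with ha
    have ha_nonneg : ∀ m, 0 ≤ a m := by
      intro m
      obtain ⟨j⟩ := hkn
      calc (0:ℝ) ≤ φ m j / φ ℓ j := div_nonneg (hφ m j) (hφ ℓ j)
        _ ≤ a m := Finset.le_sup' (fun j => φ m j / φ ℓ j) (Finset.mem_univ j)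
    have hal : a ℓ = 1 := by
      rw [ha]
      simp only
      rw [show (fun j => φ ℓ j / φ ℓ j) = fun _ => (1:ℝ) from
        funext fun j => div_self (hlpos j).ne', Finset.sup'_const]
    set S : ℝ := ∑ m ∈ T, a m with hSdef
    have hS0 : 0 ≤ S := Finset.sum_nonneg fun m _ => ha_nonneg m
    -- RHS
    have hRHS : (∑ m, ⨆ j, ENNReal.ofReal (φ m j) / ENNReal.ofReal (φ ℓ j))
        = ENNReal.ofReal (1 + S) := by
      have h1 : ∀ m, (⨆ j, ENNReal.ofReal (φ m j) / ENNReal.ofReal (φ ℓ j))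
          = ENNReal.ofReal (a m) := by
        intro m
        have hdiv : ∀ j, ENNReal.ofReal (φ m j) / ENNReal.ofReal (φ ℓ j)
            = ENNReal.ofReal (φ m j / φ ℓ j) :=
          fun j => (ENNReal.ofReal_div_of_pos (hlpos j)).symm
        simp_rw [hdiv]
        rw [ha]
        exact iSup_ofReal_eq _
      simp_rw [h1]
      rw [← ENNReal.ofReal_sum_of_nonneg (fun m _ => ha_nonneg m)]
      congr 1
      rw [← Finset.add_sum_erase Finset.univ a (Finset.mem_univ ℓ), hal, ← hT, ← hSdef]
    -- setup for LHS
    set W : Ω → ({x // x ∈ T} → ℝ) := fun ω i => Z i ω with hW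
    set C : Set (ℝ × ({x // x ∈ T} → ℝ)) := {p | ∀ i : {x // x ∈ T}, a i * p.2 i ≤ p.1} with hCdef
    have hmW : Measurable W := measurable_pi_lambda _ fun i => hmeas i
    have hC : MeasurableSet C := by
      have : C = ⋂ i : {x // x ∈ T}, {p : ℝ × ({x // x ∈ T} → ℝ) | a i * p.2 i ≤ p.1} := by
        ext p; simp [hCdef, mem_iInter]
      rw [this]
      exact MeasurableSet.iInter fun i => measurableSet_le (by fun_prop) (by fun_prop)
    -- key pointwise equivalence
    have key : ∀ ω, (∀ m, 0 < Z m ω) → ∀ i : Fin n,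
        (a i * Z i ω ≤ Z ℓ ω ↔ ∀ j, φ i j * Z i ω ≤ φ ℓ j * Z ℓ ω) := by
      intro ω hω i
      rw [← le_div_iff₀ (hω i), ha]
      simp only
      rw [Finset.sup'_le_iff]
      constructor
      · intro h j
        have := h j (Finset.mem_univ j)
        rw [div_le_div_iff₀ (hlpos j) (hω i), mul_comm (Z ℓ ω) (φ ℓ j)] at this
        exact this
      · intro h j _
        rw [div_le_div_iff₀ (hlpos j) (hω i), mul_comm (Z ℓ ω) (φ ℓ j)]
        exact h j
    have hae : {ω | ∀ j, (⨆ m, φ m j * Z m ω) = φ ℓ j * Z ℓ ω}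
        =ᵐ[ℙ] ((fun ω => (Z ℓ ω, W ω)) ⁻¹' C) := by
      filter_upwards [hSfull] with ω hω
      apply eq_iff_iff.mpr
      show (∀ j, (⨆ m, φ m j * Z m ω) = φ ℓ j * Z ℓ ω) ↔
        (∀ i : {x // x ∈ T}, a i * Z (↑i) ω ≤ Z ℓ ω)
      constructor
      · intro h i
        rw [key ω hω i]
        intro j
        rw [← h j]
        exact le_ciSup (hbdd ω j) (↑i : Fin n)
      · intro h j
        have hall : ∀ i : Fin n, φ i j * Z i ω ≤ φ ℓ j * Z ℓ ω := by
          intro i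
          by_cases hi : i = ℓ
          · subst hi; exact le_refl _
          · exact (key ω hω i).mp (h ⟨i, by simp [hT, hi]⟩) j
        exact le_antisymm (ciSup_le hall) (le_ciSup (hbdd ω j) ℓ)
    rw [measure_congr hae, hRHS]
    -- independence and product measure
    have hind2 : IndepFun (Z ℓ) W ℙ := by
      have hdisj : Disjoint ({ℓ} : Finset (Fin n)) T := by
        simp [hT, Finset.disjoint_left]
      have h := hindep.indepFun_finset {ℓ} T hdisj hmeas
      exact h.comp (measurable_pi_apply (⟨ℓ, Finset.mem_singleton_self ℓ⟩ :
        {x // x ∈ ({ℓ} : Finset (Fin n))})) measurable_id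
    set μ1 := Measure.map (Z ℓ) ℙ with hμ1def
    set μ2 := Measure.map W ℙ with hμ2def
    have hμ1 : IsProbabilityMeasure μ1 := Measure.isProbabilityMeasure_map (hmeas ℓ).aemeasurable
    have hμ2 : IsProbabilityMeasure μ2 := Measure.isProbabilityMeasure_map hmW.aemeasurable
    have hmap : Measure.map (fun ω => (Z ℓ ω, W ω)) ℙ = μ1.prod μ2 :=
      (indepFun_iff_map_prod_eq_prod_map_map (hmeas ℓ).aemeasurable hmW.aemeasurable).mp hind2
    have h0 : μ1 (Iic 0) = 0 := by
      rw [hμ1def, Measure.map_apply (hmeas ℓ) measurableSet_Iic]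
      have := ae_iff.mp (hpos ℓ)
      convert this using 2
      ext ω; simp [not_lt]
    have hIic : ∀ t : ℝ, 0 < t → μ1 (Iic t) = ENNReal.ofReal (Real.exp (-1 / t)) := by
      intro t ht
      rw [hμ1def, Measure.map_apply (hmeas ℓ) measurableSet_Iic]
      exact hF ℓ t ht
    have hslice : ∀ z : ℝ, 0 < z →
        μ2 (Prod.mk z ⁻¹' C) = ENNReal.ofReal ((frechetG z) ^ S) := by
      intro z hz
      have hsetm : MeasurableSet {w : {x // x ∈ T} → ℝ | ∀ i : {x // x ∈ T}, a i * w i ≤ z} := by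
        have : {w : {x // x ∈ T} → ℝ | ∀ i : {x // x ∈ T}, a i * w i ≤ z}
            = ⋂ i : {x // x ∈ T}, {w : {x // x ∈ T} → ℝ | a i * w i ≤ z} := by
          ext w; simp [mem_iInter]
        rw [this]
        exact MeasurableSet.iInter fun i => measurableSet_le
          (measurable_const.mul (measurable_pi_apply i)) measurable_const
      have h1 : Prod.mk z ⁻¹' C = {w : {x // x ∈ T} → ℝ | ∀ i : {x // x ∈ T}, a i * w i ≤ z} :=
        rfl
      rw [h1, hμ2def, Measure.map_apply hmW hsetm]
      have h2 : W ⁻¹' {w | ∀ i : {x // x ∈ T}, a i * w i ≤ z}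
          = ⋂ i ∈ T, Z i ⁻¹' {x | a i * x ≤ z} := by
        ext ω
        simp only [mem_preimage, mem_setOf_eq, mem_iInter, hW, Subtype.forall]
      rw [h2, hindep.meas_biInter (fun i _ =>
        ⟨{x | a i * x ≤ z}, measurableSet_le (measurable_const.mul measurable_id) measurable_const,
          rfl⟩)]
      have h3 : ∀ i ∈ T, ℙ (Z i ⁻¹' {x | a i * x ≤ z})
          = ENNReal.ofReal (Real.exp (-(a i) / z)) := by
        intro i _
        rcases eq_or_lt_of_le (ha_nonneg i) with h0a | h0a
        · have huniv : {x : ℝ | a i * x ≤ z} = univ := by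
            ext x; simp [← h0a, hz.le]
          rw [huniv, preimage_univ, measure_univ, ← h0a]
          norm_num
        · have hIic2 : Z i ⁻¹' {x | a i * x ≤ z} = {ω | Z i ω ≤ z / a i} := by
            ext ω
            simp only [mem_preimage, mem_setOf_eq]
            rw [le_div_iff₀ h0a, mul_comm]
          rw [hIic2, hF i _ (div_pos hz h0a)]
          congr 2
          field_simp
      rw [Finset.prod_congr rfl h3,
        ← ENNReal.ofReal_prod_of_nonneg (fun i _ => (Real.exp_pos _).le)]
      congr 1
      rw [← Real.exp_sum]
      unfold frechetG
      rw [if_pos hz, Real.rpow_def_of_pos (Real.exp_pos _), Real.log_exp]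
      congr 1
      rw [← Finset.sum_div, hSdef]
      field_simp
      rw [Finset.sum_neg_distrib]
    have hzae : ∀ᵐ z ∂μ1, 0 < z := by
      rw [ae_iff]
      refine measure_mono_null (fun z hz => ?_) h0
      simpa [not_lt] using hz
    calc ℙ ((fun ω => (Z ℓ ω, W ω)) ⁻¹' C)
        = (Measure.map (fun ω => (Z ℓ ω, W ω)) ℙ) C :=
          (Measure.map_apply ((hmeas ℓ).prodMk hmW) hC).symm
      _ = (μ1.prod μ2) C := by rw [hmap]
      _ = ∫⁻ z, μ2 (Prod.mk z ⁻¹' C) ∂μ1 := Measure.prod_apply hC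
      _ = ∫⁻ z, ENNReal.ofReal ((frechetG z) ^ S) ∂μ1 := by
          apply lintegral_congr_ae
          filter_upwards [hzae] with z hz
          exact hslice z hz
      _ = ENNReal.ofReal (1 / (S + 1)) := frechet_lintegral μ1 h0 hIic S hS0
      _ = (ENNReal.ofReal (1 + S))⁻¹ := by
          rw [← ENNReal.ofReal_inv_of_pos (by linarith : (0:ℝ) < 1 + S), one_div, add_comm]
  · -- degenerate case
    push_neg at hgood
    obtain ⟨j, m, hmj, hlj⟩ := hgood
    have hlj' : φ ℓ j = 0 := le_antisymm hlj (hφ ℓ j)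
    have hRHS : (∑ m', ⨆ j', ENNReal.ofReal (φ m' j') / ENNReal.ofReal (φ ℓ j')) = ⊤ := by
      rw [← top_le_iff]
      calc (⊤ : ENNReal) = ENNReal.ofReal (φ m j) / ENNReal.ofReal (φ ℓ j) := by
            rw [hlj', ENNReal.ofReal_zero, ENNReal.div_zero]
            exact (ENNReal.ofReal_pos.mpr hmj).ne'
        _ ≤ ⨆ j', ENNReal.ofReal (φ m j') / ENNReal.ofReal (φ ℓ j') :=
            le_iSup (fun j' => ENNReal.ofReal (φ m j') / ENNReal.ofReal (φ ℓ j')) j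
        _ ≤ _ := Finset.single_le_sum
            (f := fun m' => ⨆ j', ENNReal.ofReal (φ m' j') / ENNReal.ofReal (φ ℓ j'))
            (fun _ _ => zero_le) (Finset.mem_univ m)
    rw [hRHS, ENNReal.inv_top]
    refine measure_mono_null ?_ (ae_iff.mp hSfull)
    intro ω hω
    simp only [mem_setOf_eq, not_forall]
    by_contra hcon
    push_neg at hcon
    have h1 : φ m j * Z m ω ≤ φ ℓ j * Z ℓ ω := by
      rw [← hω j]
      exact le_ciSup (hbdd ω j) m
    rw [hlj', zero_mul] at h1
    exact absurd (mul_pos hmj (hcon m)) (not_lt.mpr h1)
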